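/- arXiv:1910.08990 — 2 statements merged into one kernel-verified Lean document; each statement's English description precedes it below -/
import Mathlib

section
/- For every natural number m, the sum over all pairs (d1, d2) of natural numbers with d1 + 2·d2 = m of m!^2 / (d1!^2 · d2!^4) equals the constant coefficient (with respect to the variables x0, x1, x2, x3) of the m-th power of the Laurent polynomial W = (x0^2 + x1^2 + x2·x3)(x0·x1 + x2^2 + x3^2) / (x0·x1·x2·x3). -/
open MvPolynomial in
/-- The Laurent polynomial `W = (x0²+x1²+x2x3)(x0x1+x2²+x3²)/(x0x1x2x3)` has numerator: -/
noncomputable def quadricsNumerator : MvPolynomial (Fin 4) ℤ :=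
  ((X 0) ^ 2 + (X 1) ^ 2 + (X 2) * (X 3)) * ((X 0) * (X 1) + (X 2) ^ 2 + (X 3) ^ 2)

open MvPolynomial Finset Finsupp in
noncomputable def EAaux (m j i : ℕ) : Fin 4 →₀ ℕ :=
  Finsupp.single 0 (2*i) + Finsupp.single 1 (2*(j-i)) + Finsupp.single 2 (m-j)
    + Finsupp.single 3 (m-j)

open MvPolynomial Finset Finsupp in
noncomputable def EBaux (m q p : ℕ) : Fin 4 →₀ ℕ :=
  Finsupp.single 0 p + Finsupp.single 1 p + Finsupp.single 2 (2*(q-p))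
    + Finsupp.single 3 (2*(m-q))

section aux
open MvPolynomial Finset Finsupp

lemma EA0aux (m j i : ℕ) : EAaux m j i 0 = 2*i := by simp [EAaux, Finsupp.single_apply]
lemma EA1aux (m j i : ℕ) : EAaux m j i 1 = 2*(j-i) := by simp [EAaux, Finsupp.single_apply]
lemma EA2aux (m j i : ℕ) : EAaux m j i 2 = m-j := by simp [EAaux, Finsupp.single_apply]
lemma EA3aux (m j i : ℕ) : EAaux m j i 3 = m-j := by simp [EAaux, Finsupp.single_apply]
lemma EB0aux (m q p : ℕ) : EBaux m q p 0 = p := by simp [EBaux, Finsupp.single_apply]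
lemma EB1aux (m q p : ℕ) : EBaux m q p 1 = p := by simp [EBaux, Finsupp.single_apply]
lemma EB2aux (m q p : ℕ) : EBaux m q p 2 = 2*(q-p) := by simp [EBaux, Finsupp.single_apply]
lemma EB3aux (m q p : ℕ) : EBaux m q p 3 = 2*(m-q) := by simp [EBaux, Finsupp.single_apply]

lemma ext4aux (f g : Fin 4 →₀ ℕ) (h0 : f 0 = g 0) (h1 : f 1 = g 1) (h2 : f 2 = g 2)
    (h3 : f 3 = g 3) : f = g := by
  ext k; fin_cases k <;> assumption

lemma condIffAux (m j i q p : ℕ) (hj : j ≤ m) (hq : q ≤ m) (hi : i ≤ m) (hp : p ≤ m) :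
    (EAaux m j i + EBaux m q p = Finsupp.equivFunOnFinite.symm fun _ : Fin 4 => m) ↔
    (j = 2*i ∧ p = m - 2*i ∧ q = m - i) := by
  constructor
  · intro h
    have h0 := DFunLike.congr_fun h 0
    have h1 := DFunLike.congr_fun h 1
    have h2 := DFunLike.congr_fun h 2
    have h3 := DFunLike.congr_fun h 3
    rw [Finsupp.add_apply, EA0aux, EB0aux, Finsupp.coe_equivFunOnFinite_symm] at h0
    rw [Finsupp.add_apply, EA1aux, EB1aux, Finsupp.coe_equivFunOnFinite_symm] at h1
    rw [Finsupp.add_apply, EA2aux, EB2aux, Finsupp.coe_equivFunOnFinite_symm] at h2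
    rw [Finsupp.add_apply, EA3aux, EB3aux, Finsupp.coe_equivFunOnFinite_symm] at h3
    omega
  · rintro ⟨rfl, rfl, rfl⟩
    apply ext4aux <;>
      simp only [Finsupp.add_apply, EA0aux, EA1aux, EA2aux, EA3aux, EB0aux, EB1aux,
        EB2aux, EB3aux, Finsupp.coe_equivFunOnFinite_symm] <;> omega

lemma hAaux (m : ℕ) : ((X 0)^2 + (X 1)^2 + (X 2)*(X 3) : MvPolynomial (Fin 4) ℤ) ^ m
    = ∑ j ∈ range (m+1), ∑ i ∈ range (j+1),
        monomial (EAaux m j i) ((m.choose j * j.choose i : ℕ) : ℤ) := by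
  rw [add_pow]
  refine Finset.sum_congr rfl fun j hj => ?_
  rw [add_pow, Finset.sum_mul, Finset.sum_mul]
  refine Finset.sum_congr rfl fun i hi => ?_
  simp only [EAaux, ← C_eq_coe_nat, mul_pow, ← pow_mul, X_pow_eq_monomial, monomial_mul,
    C_mul_monomial, monomial_pow, Finsupp.smul_single, smul_eq_mul, one_pow, mul_one,
    Nat.cast_mul, mul_comm, add_assoc]

lemma hBaux (m : ℕ) : ((X 0)*(X 1) + (X 2)^2 + (X 3)^2 : MvPolynomial (Fin 4) ℤ) ^ m
    = ∑ q ∈ range (m+1), ∑ p ∈ range (q+1),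
        monomial (EBaux m q p) ((m.choose q * q.choose p : ℕ) : ℤ) := by
  rw [add_pow]
  refine Finset.sum_congr rfl fun q hq => ?_
  rw [add_pow, Finset.sum_mul, Finset.sum_mul]
  refine Finset.sum_congr rfl fun p hp => ?_
  simp only [EBaux, ← C_eq_coe_nat, mul_pow, ← pow_mul, X_pow_eq_monomial, monomial_mul,
    C_mul_monomial, monomial_pow, Finsupp.smul_single, smul_eq_mul, one_pow, mul_one,
    Nat.cast_mul, mul_comm, add_assoc]

lemma hcoeffAux (m : ℕ) :
    MvPolynomial.coeff (Finsupp.equivFunOnFinite.symm fun _ : Fin 4 => m)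
      ((((X 0)^2 + (X 1)^2 + (X 2)*(X 3)) * ((X 0)*(X 1) + (X 2)^2 + (X 3)^2)
        : MvPolynomial (Fin 4) ℤ) ^ m)
    = ∑ i ∈ range (m+1),
        if 2*i ≤ m
        then ((m.choose (2*i) * (2*i).choose i : ℕ) : ℤ)
              * ((m.choose (m-i) * (m-i).choose (m-2*i) : ℕ) : ℤ)
        else 0 := by
  set c := Finsupp.equivFunOnFinite.symm fun _ : Fin 4 => m with hc
  have step1 : MvPolynomial.coeff c
      ((((X 0)^2 + (X 1)^2 + (X 2)*(X 3)) * ((X 0)*(X 1) + (X 2)^2 + (X 3)^2)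
        : MvPolynomial (Fin 4) ℤ) ^ m)
      = ∑ q ∈ range (m+1), ∑ p ∈ range (q+1), ∑ j ∈ range (m+1), ∑ i ∈ range (j+1),
          if EAaux m j i + EBaux m q p = c
          then ((m.choose j * j.choose i : ℕ) : ℤ) * ((m.choose q * q.choose p : ℕ) : ℤ)
          else 0 := by
    rw [mul_pow, hAaux, hBaux]
    simp only [Finset.sum_mul, Finset.mul_sum, MvPolynomial.coeff_sum, monomial_mul,
      MvPolynomial.coeff_monomial]
  rw [step1]
  have extend : (∑ q ∈ range (m+1), ∑ p ∈ range (q+1), ∑ j ∈ range (m+1),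
        ∑ i ∈ range (j+1),
          if EAaux m j i + EBaux m q p = c
          then ((m.choose j * j.choose i : ℕ) : ℤ) * ((m.choose q * q.choose p : ℕ) : ℤ)
          else 0)
      = ∑ q ∈ range (m+1), ∑ p ∈ range (m+1), ∑ j ∈ range (m+1), ∑ i ∈ range (m+1),
          if EAaux m j i + EBaux m q p = c
          then ((m.choose j * j.choose i : ℕ) : ℤ) * ((m.choose q * q.choose p : ℕ) : ℤ)
          else 0 := by
    refine Finset.sum_congr rfl fun q hq => ?_
    rw [Finset.mem_range] at hq
    rw [Finset.sum_subset (Finset.range_subset_range.2 (by omega : q + 1 ≤ m + 1))]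
    · refine Finset.sum_congr rfl fun p hp => Finset.sum_congr rfl fun j hj => ?_
      rw [Finset.mem_range] at hj
      rw [Finset.sum_subset (Finset.range_subset_range.2 (by omega : j + 1 ≤ m + 1))]
      intro i hi hi'
      rw [Finset.mem_range] at hi hi'
      rw [Nat.choose_eq_zero_of_lt (by omega : j < i)]
      simp
    · intro p hp hp'
      rw [Finset.mem_range] at hp hp'
      rw [Nat.choose_eq_zero_of_lt (by omega : q < p)]
      simp
  rw [extend]
  have reorder : (∑ q ∈ range (m+1), ∑ p ∈ range (m+1), ∑ j ∈ range (m+1),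
        ∑ i ∈ range (m+1),
          if EAaux m j i + EBaux m q p = c
          then ((m.choose j * j.choose i : ℕ) : ℤ) * ((m.choose q * q.choose p : ℕ) : ℤ)
          else 0)
      = ∑ i ∈ range (m+1), ∑ q ∈ range (m+1), ∑ p ∈ range (m+1), ∑ j ∈ range (m+1),
          if EAaux m j i + EBaux m q p = c
          then ((m.choose j * j.choose i : ℕ) : ℤ) * ((m.choose q * q.choose p : ℕ) : ℤ)
          else 0 := by
    calc (∑ q ∈ range (m+1), ∑ p ∈ range (m+1), ∑ j ∈ range (m+1), ∑ i ∈ range (m+1),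
          if EAaux m j i + EBaux m q p = c
          then ((m.choose j * j.choose i : ℕ) : ℤ) * ((m.choose q * q.choose p : ℕ) : ℤ)
          else 0)
        = ∑ q ∈ range (m+1), ∑ p ∈ range (m+1), ∑ i ∈ range (m+1), ∑ j ∈ range (m+1),
          if EAaux m j i + EBaux m q p = c
          then ((m.choose j * j.choose i : ℕ) : ℤ) * ((m.choose q * q.choose p : ℕ) : ℤ)
          else 0 := by
          exact Finset.sum_congr rfl fun q _ => Finset.sum_congr rfl fun p _ =>
            Finset.sum_comm
      _ = ∑ q ∈ range (m+1), ∑ i ∈ range (m+1), ∑ p ∈ range (m+1), ∑ j ∈ range (m+1),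
          if EAaux m j i + EBaux m q p = c
          then ((m.choose j * j.choose i : ℕ) : ℤ) * ((m.choose q * q.choose p : ℕ) : ℤ)
          else 0 := Finset.sum_congr rfl fun q _ => Finset.sum_comm
      _ = ∑ i ∈ range (m+1), ∑ q ∈ range (m+1), ∑ p ∈ range (m+1), ∑ j ∈ range (m+1),
          if EAaux m j i + EBaux m q p = c
          then ((m.choose j * j.choose i : ℕ) : ℤ) * ((m.choose q * q.choose p : ℕ) : ℤ)
          else 0 := Finset.sum_comm
  rw [reorder]
  refine Finset.sum_congr rfl fun i hi => ?_
  rw [Finset.mem_range] at hi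
  have cong : (∑ q ∈ range (m+1), ∑ p ∈ range (m+1), ∑ j ∈ range (m+1),
        if EAaux m j i + EBaux m q p = c
        then ((m.choose j * j.choose i : ℕ) : ℤ) * ((m.choose q * q.choose p : ℕ) : ℤ)
        else 0)
      = ∑ q ∈ range (m+1), ∑ p ∈ range (m+1), ∑ j ∈ range (m+1),
        if j = 2*i then (if p = m - 2*i then (if q = m - i then
          ((m.choose j * j.choose i : ℕ) : ℤ) * ((m.choose q * q.choose p : ℕ) : ℤ)
          else 0) else 0) else 0 := by
    refine Finset.sum_congr rfl fun q hq => Finset.sum_congr rfl fun p hp =>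
      Finset.sum_congr rfl fun j hj => ?_
    rw [Finset.mem_range] at hq hp hj
    simp only [hc, condIffAux m j i q p (by omega) (by omega) (by omega) (by omega), ite_and]
  rw [cong]
  by_cases h2i : 2*i ≤ m
  · simp [Finset.sum_ite_eq', Finset.mem_range, Nat.lt_succ_iff, Nat.sub_le, h2i]
  · simp [Finset.sum_ite_eq', Finset.mem_range, Nat.lt_succ_iff, Nat.sub_le, h2i]

lemma term_eqAux (m i : ℕ) (h : 2*i ≤ m) :
    ((m.choose (2*i) * (2*i).choose i : ℕ) : ℚ) * ((m.choose (m-i) * (m-i).choose (m-2*i) : ℕ) : ℚ)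
    = (m.factorial : ℚ)^2 / (((m-2*i).factorial : ℚ)^2 * ((i.factorial : ℚ))^4) := by
  have h2 : (2*i) - i = i := by omega
  have h3 : m - (m - i) = i := by omega
  have h4 : (m - i) - (m - 2*i) = i := by omega
  push_cast
  rw [Nat.cast_choose ℚ h, Nat.cast_choose ℚ (by omega : i ≤ 2*i),
      Nat.cast_choose ℚ (by omega : m - i ≤ m), Nat.cast_choose ℚ (by omega : m - 2*i ≤ m - i),
      h2, h3, h4]
  have f1 : ((m-2*i).factorial : ℚ) ≠ 0 := Nat.cast_ne_zero.2 (Nat.factorial_ne_zero _)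
  have f2 : (i.factorial : ℚ) ≠ 0 := Nat.cast_ne_zero.2 (Nat.factorial_ne_zero _)
  have f3 : ((2*i).factorial : ℚ) ≠ 0 := Nat.cast_ne_zero.2 (Nat.factorial_ne_zero _)
  have f4 : ((m-i).factorial : ℚ) ≠ 0 := Nat.cast_ne_zero.2 (Nat.factorial_ne_zero _)
  field_simp

end aux

/-- For every `m`, the sum over `(d1, d2)` with `d1 + 2·d2 = m` of `m!²/(d1!²·d2!⁴)`
equals the constant coefficient of `W^m`, i.e., the coefficient of `(x0x1x2x3)^m` in the
`m`-th power of the numerator of `W`. -/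
theorem stmt4 (m : ℕ) :
    (∑ d ∈ (Finset.range (m + 1) ×ˢ Finset.range (m + 1)).filter
        (fun d => d.1 + 2 * d.2 = m),
      ((m.factorial : ℚ)) ^ 2 / ((d.1.factorial : ℚ) ^ 2 * (d.2.factorial : ℚ) ^ 4))
    = ((MvPolynomial.coeff (Finsupp.equivFunOnFinite.symm fun _ : Fin 4 => m)
        (quadricsNumerator ^ m) : ℤ) : ℚ) := by
  have hq : quadricsNumerator = ((MvPolynomial.X 0)^2 + (MvPolynomial.X 1)^2
      + (MvPolynomial.X 2)*(MvPolynomial.X 3)) * ((MvPolynomial.X 0)*(MvPolynomial.X 1)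
      + (MvPolynomial.X 2)^2 + (MvPolynomial.X 3)^2) := rfl
  rw [hq, hcoeffAux m]
  push_cast [apply_ite (fun z : ℤ => (z : ℚ))]
  rw [← Finset.sum_filter]
  refine Finset.sum_nbij' (fun d => d.2) (fun i => (m - 2*i, i)) ?_ ?_ ?_ ?_ ?_
  · intro a ha
    simp only [Finset.mem_filter, Finset.mem_product, Finset.mem_range] at ha ⊢
    omega
  · intro a ha
    simp only [Finset.mem_filter, Finset.mem_product, Finset.mem_range] at ha ⊢
    omega
  · intro a ha
    simp only [Finset.mem_filter, Finset.mem_product, Finset.mem_range] at ha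
    ext <;> simp <;> omega
  · intro a ha
    rfl
  · intro a ha
    simp only [Finset.mem_filter, Finset.mem_product, Finset.mem_range] at ha
    have h2 : 2 * a.2 ≤ m := by omega
    have h1 : a.1 = m - 2 * a.2 := by omega
    rw [h1, ← term_eqAux m a.2 h2]
    push_cast
    ring
end

section
/- In the formal group with group law z1 • z2 = (z1 + z2)/(1 - z1·z2) over F_p (p an odd prime), the p-fold product of z with itself equals (-1)^((p-1)/2) · z^p, as an identity of formal power series / rational functions; in particular for z ∈ F_p the p-th power of z under • equals (-1)^((p-1)/2) · z. -/
/-- The formal group law `z1 • z2 = (z1+z2)/(1-z1·z2)` on rational functions over `F_p`. -/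
noncomputable def bulletOp (p : ℕ) [Fact p.Prime] (a b : RatFunc (ZMod p)) :
    RatFunc (ZMod p) :=
  (a + b) / (1 - a * b)

/-- The `n`-fold product `z • z • ⋯ • z` of the coordinate `z = X` with itself. -/
noncomputable def bulletFold (p : ℕ) [Fact p.Prime] : ℕ → RatFunc (ZMod p)
  | 0 => 0
  | n + 1 => bulletOp p (bulletFold p n) RatFunc.X

/-- `(C_n, S_n)` with `C_n + i S_n = (1 + iX)^n`. -/
noncomputable def myCS (p : ℕ) [Fact p.Prime] :
    ℕ → Polynomial (ZMod p) × Polynomial (ZMod p)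
  | 0 => (1, 0)
  | n + 1 => ((myCS p n).1 - Polynomial.X * (myCS p n).2,
      (myCS p n).2 + Polynomial.X * (myCS p n).1)

theorem myCS_coeff_zero (p : ℕ) [Fact p.Prime] (n : ℕ) :
    ((myCS p n).1).coeff 0 = 1 ∧ ((myCS p n).2).coeff 0 = 0 := by
  induction n with
  | zero => simp [myCS]
  | succ n ih =>
    simp [myCS, Polynomial.mul_coeff_zero, Polynomial.coeff_X_zero, ih.1, ih.2]

theorem myCS_fst_ne_zero (p : ℕ) [Fact p.Prime] (n : ℕ) : (myCS p n).1 ≠ 0 := by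
  intro h
  have := (myCS_coeff_zero p n).1
  rw [h] at this
  simp at this

open Polynomial AdjoinRoot in
theorem myCS_complex (p : ℕ) [Fact p.Prime] (n : ℕ) :
    (Polynomial.map (AdjoinRoot.of (X ^ 2 + 1 : Polynomial (ZMod p))) (myCS p n).1)
        + Polynomial.C (root (X ^ 2 + 1 : Polynomial (ZMod p))) *
          (Polynomial.map (AdjoinRoot.of (X ^ 2 + 1)) (myCS p n).2)
      = (1 + Polynomial.C (root (X ^ 2 + 1 : Polynomial (ZMod p))) * Polynomial.X) ^ n ∧
    (Polynomial.map (AdjoinRoot.of (X ^ 2 + 1 : Polynomial (ZMod p))) (myCS p n).1)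
        - Polynomial.C (root (X ^ 2 + 1 : Polynomial (ZMod p))) *
          (Polynomial.map (AdjoinRoot.of (X ^ 2 + 1)) (myCS p n).2)
      = (1 - Polynomial.C (root (X ^ 2 + 1 : Polynomial (ZMod p))) * Polynomial.X) ^ n := by
  set f : Polynomial (ZMod p) := X ^ 2 + 1 with hf
  have hi : (root f) ^ 2 = -1 := by
    have h0 := AdjoinRoot.eval₂_root f
    rw [hf] at h0
    simp only [eval₂_add, eval₂_pow, eval₂_one, eval₂_X] at h0
    linear_combination h0
  have hI : (Polynomial.C (root f) : Polynomial (AdjoinRoot f)) ^ 2 = -1 := by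
    rw [← Polynomial.C_pow, hi, map_neg, map_one]
  induction n with
  | zero => simp [myCS]
  | succ n ih =>
    obtain ⟨ih1, ih2⟩ := ih
    constructor
    · rw [pow_succ, ← ih1]
      simp only [myCS, Polynomial.map_sub, Polynomial.map_add, Polynomial.map_mul,
        Polynomial.map_X]
      set a := Polynomial.map (AdjoinRoot.of f) (myCS p n).1
      set b := Polynomial.map (AdjoinRoot.of f) (myCS p n).2
      linear_combination (-(Polynomial.X : Polynomial (AdjoinRoot f)) * b) * hI
    · rw [pow_succ, ← ih2]
      simp only [myCS, Polynomial.map_sub, Polynomial.map_add, Polynomial.map_mul,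
        Polynomial.map_X]
      set a := Polynomial.map (AdjoinRoot.of f) (myCS p n).1
      set b := Polynomial.map (AdjoinRoot.of f) (myCS p n).2
      linear_combination (-(Polynomial.X : Polynomial (AdjoinRoot f)) * b) * hI

open Polynomial AdjoinRoot in
theorem myCS_p (p : ℕ) [Fact p.Prime] (hodd : Odd p) :
    (myCS p p).1 = 1 ∧ (myCS p p).2 = (-1) ^ ((p - 1) / 2) * Polynomial.X ^ p := by
  set f : Polynomial (ZMod p) := X ^ 2 + 1 with hf
  haveI : Nontrivial (AdjoinRoot f) := by
    apply AdjoinRoot.nontrivial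
    rw [hf]
    have h2 : (X ^ 2 + 1 : Polynomial (ZMod p)).degree = 2 := by
      compute_degree!
    rw [h2]; norm_num
  have hinj : Function.Injective (AdjoinRoot.of f) := (AdjoinRoot.of f).injective
  have hmapinj : Function.Injective (Polynomial.map (AdjoinRoot.of f)) :=
    Polynomial.map_injective _ hinj
  haveI : CharP (AdjoinRoot f) p := charP_of_injective_ringHom hinj p
  have hi : (root f) ^ 2 = -1 := by
    have h0 := AdjoinRoot.eval₂_root f
    rw [hf] at h0
    simp only [eval₂_add, eval₂_pow, eval₂_one, eval₂_X] at h0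
    linear_combination h0
  have hI : (Polynomial.C (root f) : Polynomial (AdjoinRoot f)) ^ 2 = -1 := by
    rw [← Polynomial.C_pow, hi, map_neg, map_one]
  set m := (p - 1) / 2 with hm
  have hpm : p = 2 * m + 1 := by
    obtain ⟨k, hk⟩ := hodd
    omega
  have hip : (root f) ^ p = (-1) ^ m * root f := by
    have hstep : (root f) ^ p = (root f) ^ (2 * m + 1) := congrArg (root f ^ ·) hpm
    rw [hstep, pow_succ, pow_mul, hi]
  obtain ⟨h1, h2⟩ := myCS_complex p p
  rw [show (X ^ 2 + 1 : Polynomial (ZMod p)) = f from rfl] at h1 h2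
  set a := Polynomial.map (AdjoinRoot.of f) (myCS p p).1 with ha
  set b := Polynomial.map (AdjoinRoot.of f) (myCS p p).2 with hb
  set I : Polynomial (AdjoinRoot f) := Polynomial.C (root f) with hIdef
  have hpow1 : (1 + I * Polynomial.X) ^ p
      = 1 + (-1) ^ m * I * Polynomial.X ^ p := by
    rw [add_pow_char, one_pow, mul_pow, hIdef, ← Polynomial.C_pow, hip, map_mul,
      map_pow, map_neg, map_one, mul_assoc]
  have hpow2 : (1 - I * Polynomial.X) ^ p
      = 1 - (-1) ^ m * I * Polynomial.X ^ p := by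
    rw [sub_pow_char, one_pow, mul_pow, hIdef, ← Polynomial.C_pow, hip, map_mul,
      map_pow, map_neg, map_one, mul_assoc]
  rw [hpow1] at h1
  rw [hpow2] at h2
  -- extract real and imaginary parts
  have h2ne : (2 : Polynomial (ZMod p)) ≠ 0 := by
    intro h
    have h2K : (2 : ZMod p) = 0 := by
      have := congrArg (fun q => Polynomial.coeff q 0) h
      simpa using this
    have h2K' : ((2 : ℕ) : ZMod p) = 0 := by exact_mod_cast h2K
    rw [ZMod.natCast_eq_zero_iff] at h2K'
    have hple := Nat.le_of_dvd (by norm_num) h2K'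
    have hp2 := (Fact.out : p.Prime).two_le
    obtain ⟨k, hk⟩ := hodd
    omega
  constructor
  · have hA : Polynomial.map (AdjoinRoot.of f) (2 * (myCS p p).1)
        = Polynomial.map (AdjoinRoot.of f) (2 * 1) := by
      simp only [Polynomial.map_mul, Polynomial.map_ofNat, Polynomial.map_one, ← ha]
      linear_combination h1 + h2
    have := hmapinj hA
    exact mul_left_cancel₀ h2ne this
  · have hb2 : I * (2 * b) = I * (2 * ((-1) ^ m * Polynomial.X ^ p)) := by
      linear_combination h1 - h2
    have hb3 : I ^ 2 * (2 * b) = I ^ 2 * (2 * ((-1) ^ m * Polynomial.X ^ p)) := by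
      rw [pow_two, mul_assoc, hb2, mul_assoc]
    rw [hI, neg_one_mul, neg_one_mul, neg_inj] at hb3
    have hB : Polynomial.map (AdjoinRoot.of f) (2 * (myCS p p).2)
        = Polynomial.map (AdjoinRoot.of f) (2 * ((-1) ^ m * Polynomial.X ^ p)) := by
      simp only [Polynomial.map_mul, Polynomial.map_ofNat, Polynomial.map_pow,
        Polynomial.map_neg, Polynomial.map_one, Polynomial.map_X, ← hb]
      exact hb3
    have := hmapinj hB
    exact mul_left_cancel₀ h2ne this

theorem bulletFold_eq (p : ℕ) [Fact p.Prime] (n : ℕ) :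
    bulletFold p n = algebraMap _ (RatFunc (ZMod p)) (myCS p n).2
      / algebraMap _ (RatFunc (ZMod p)) (myCS p n).1 := by
  induction n with
  | zero => simp [bulletFold, myCS]
  | succ n ih =>
    set s := algebraMap _ (RatFunc (ZMod p)) (myCS p n).2 with hs
    set c := algebraMap _ (RatFunc (ZMod p)) (myCS p n).1 with hcdef
    have hc : c ≠ 0 := RatFunc.algebraMap_ne_zero (myCS_fst_ne_zero p n)
    have hd : c - RatFunc.X * s ≠ 0 := by
      have h := RatFunc.algebraMap_ne_zero (myCS_fst_ne_zero p (n + 1))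
      rw [show (myCS p (n + 1)).1 = (myCS p n).1 - Polynomial.X * (myCS p n).2 from rfl,
        map_sub, map_mul, RatFunc.algebraMap_X, ← hs, ← hcdef] at h
      exact h
    show bulletOp p (bulletFold p n) RatFunc.X = _
    rw [show (myCS p (n + 1)).2 = (myCS p n).2 + Polynomial.X * (myCS p n).1 from rfl,
      show (myCS p (n + 1)).1 = (myCS p n).1 - Polynomial.X * (myCS p n).2 from rfl,
      map_add, map_sub, map_mul, map_mul, RatFunc.algebraMap_X, ← hs, ← hcdef, ih, bulletOp]
    have hden1 : (1 : RatFunc (ZMod p)) - s / c * RatFunc.X = (c - RatFunc.X * s) / c := by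
      field_simp
    have hden1ne : (1 : RatFunc (ZMod p)) - s / c * RatFunc.X ≠ 0 := by
      rw [hden1]
      exact div_ne_zero hd hc
    rw [div_eq_div_iff hden1ne hd]
    have hnum1 : s / c + RatFunc.X = (s + RatFunc.X * c) / c := by
      field_simp
    rw [hnum1, hden1, div_mul_eq_mul_div, mul_div_assoc]

/-- In the formal group with law `z1 • z2 = (z1+z2)/(1-z1z2)` over `F_p` (`p` an odd prime),
the `p`-fold product of `z` with itself equals `(-1)^((p-1)/2) · z^p` as rational functions. -/
theorem stmt5 (p : ℕ) [Fact p.Prime] (hodd : Odd p) :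
    bulletFold p p = (-1) ^ ((p - 1) / 2) * RatFunc.X ^ p := by
  obtain ⟨hC, hS⟩ := myCS_p p hodd
  rw [bulletFold_eq, hC, hS]
  simp [map_mul, map_pow, map_neg, map_one, RatFunc.algebraMap_X]
end
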